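/- Let F_n be the free group on x_1,…,x_n. The reduced free group RF_n, defined as the quotient of F_n by the normal closure of all elements [x_i, w^{-1} x_i w] for i ∈ {1,…,n} and w ∈ F_n, is a nilpotent group of nilpotency class at most n. -/

import Mathlib

/-- The set of relators `[x_i, w⁻¹ x_i w]` (with `[a,b] = a⁻¹b⁻¹ab`) in the free group. -/
def redRelators (n : ℕ) : Set (FreeGroup (Fin n)) :=
  {r | ∃ (i : Fin n) (w : FreeGroup (Fin n)),
    r = (FreeGroup.of i)⁻¹ * (w⁻¹ * FreeGroup.of i * w)⁻¹ *
        FreeGroup.of i * (w⁻¹ * FreeGroup.of i * w)}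

/-- The reduced free group `RF_n`. -/
def RF (n : ℕ) := FreeGroup (Fin n) ⧸ Subgroup.normalClosure (redRelators n)

instance (n : ℕ) : Group (RF n) := by unfold RF; infer_instance

open scoped commutatorElement

section Aux

variable {G : Type*} [Group G]

lemma aux_normal_iSup {ι : Sort*} (K : ι → Subgroup G) (h : ∀ i, (K i).Normal) :
    (⨆ i, K i).Normal := by
  constructor
  intro x hx g
  refine Subgroup.iSup_induction K (C := fun y => g * y * g⁻¹ ∈ ⨆ i, K i) hx
    (fun i y hy => le_iSup K i ((h i).conj_mem y hy g)) (by simpa using one_mem (⨆ i, K i)) ?_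
  intro a b ha hb
  rw [show g * (a * b) * g⁻¹ = (g * a * g⁻¹) * (g * b * g⁻¹) by group]
  exact mul_mem ha hb

lemma aux_commutator_iSup_right_le {ι : Sort*} (H L : Subgroup G) [hL : L.Normal]
    (K : ι → Subgroup G) (h : ∀ i, ⁅H, K i⁆ ≤ L) : ⁅H, ⨆ i, K i⁆ ≤ L := by
  rw [Subgroup.commutator_le]
  intro g hg k hk
  refine Subgroup.iSup_induction K (C := fun (k : G) => ⁅g, k⁆ ∈ L) hk
    (fun i y hy => h i (Subgroup.commutator_mem_commutator hg hy)) (by simpa using one_mem L) ?_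
  intro x y hx hy
  rw [show ⁅g, x * y⁆ = ⁅g, x⁆ * (x * ⁅g, y⁆ * x⁻¹) by
    simp only [commutatorElement_def]; group]
  exact mul_mem hx (hL.conj_mem _ hy x)

lemma aux_commutator_iSup_left_le {ι : Sort*} (H L : Subgroup G) [L.Normal]
    (K : ι → Subgroup G) (h : ∀ i, ⁅K i, H⁆ ≤ L) : ⁅⨆ i, K i, H⁆ ≤ L := by
  rw [Subgroup.commutator_comm]
  exact aux_commutator_iSup_right_le H L K fun i =>
    (Subgroup.commutator_comm (K i) H) ▸ h i

/-- A group generated by `n` abelian normal subgroups is nilpotent of class at most `n`. -/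
lemma aux_nilpotent_of_gens {n : ℕ} (A : Fin n → Subgroup G)
    (hnorm : ∀ i, (A i).Normal) (habel : ∀ i, ⁅A i, A i⁆ = ⊥)
    (hgen : ⨆ i, A i = ⊤) : (⊤ : Subgroup G).lowerCentralSeries n = ⊥ := by
  set I : Finset (Fin n) → Subgroup G := fun S => ⨅ i ∈ S, A i with hIdef
  have hInormal : ∀ S, (I S).Normal := by
    intro S
    constructor
    intro x hx g
    simp only [hIdef, Subgroup.mem_iInf] at hx ⊢
    intro i hi
    exact (hnorm i).conj_mem _ (hx i hi) g
  set T : ℕ → Subgroup G := fun k => ⨆ S : {S : Finset (Fin n) // k + 1 ≤ S.card}, I S.1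
    with hTdef
  have hTnormal : ∀ k, (T k).Normal := fun k => aux_normal_iSup _ (fun S => hInormal S.1)
  have key : ∀ k, (⊤ : Subgroup G).lowerCentralSeries k ≤ T k := by
    intro k
    induction k with
    | zero =>
      rw [Subgroup.lowerCentralSeries_zero, ← hgen]
      refine iSup_le fun i => le_trans ?_
        (le_iSup _ (⟨{i}, by simp⟩ : {S : Finset (Fin n) // 0 + 1 ≤ S.card}))
      refine le_iInf fun j => le_iInf fun hj => ?_
      rcases Finset.mem_singleton.mp hj with rfl
      exact le_rfl
    | succ k ih =>
      rw [Subgroup.lowerCentralSeries_succ]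
      haveI := hTnormal (k + 1)
      rw [← hgen] at ih ⊢
      refine aux_commutator_iSup_right_le _ _ _ (fun i => ?_)
      refine le_trans (Subgroup.commutator_mono ih le_rfl) ?_
      refine aux_commutator_iSup_left_le _ _ _ (fun S => ?_)
      haveI := hInormal S.1
      haveI := hnorm i
      by_cases hmem : i ∈ S.1
      · have h1 : I S.1 ≤ A i := iInf_le_of_le i (iInf_le _ hmem)
        calc ⁅I S.1, A i⁆ ≤ ⁅A i, A i⁆ := Subgroup.commutator_mono h1 le_rfl
          _ = ⊥ := habel i
          _ ≤ T (k + 1) := bot_le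
      · refine le_trans (Subgroup.commutator_le_inf _ _) ?_
        refine le_trans ?_ (le_iSup _ (⟨insert i S.1, by
          rw [Finset.card_insert_of_notMem hmem]; omega⟩ :
          {S : Finset (Fin n) // k + 1 + 1 ≤ S.card}))
        refine le_iInf fun j => le_iInf fun hj => ?_
        rcases Finset.mem_insert.mp hj with rfl | hjS
        · exact inf_le_right
        · exact le_trans inf_le_left (iInf_le_of_le j (iInf_le _ hjS))
  have hempty : IsEmpty {S : Finset (Fin n) // n + 1 ≤ S.card} := by
    constructor
    rintro ⟨S, hS⟩
    have := Finset.card_le_univ S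
    simp [Finset.card_fin] at this
    omega
  have hTn : T n = ⊥ := by
    rw [hTdef]
    exact iSup_of_empty _
  exact le_bot_iff.mp (hTn ▸ key n)

end Aux

/-- The reduced free group RF_n is nilpotent of class at most n: Γ_{n+1}(RF_n) = 1. -/
theorem RF_nilpotent (n : ℕ) : (⊤ : Subgroup (RF n)).lowerCentralSeries n = ⊥ := by
  let N := Subgroup.normalClosure (redRelators n)
  let mk : FreeGroup (Fin n) →* RF n := QuotientGroup.mk' N
  let a : Fin n → RF n := fun i => mk (FreeGroup.of i)
  let A : Fin n → Subgroup (RF n) := fun i => Subgroup.normalClosure {a i}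
  have hnorm : ∀ i, (A i).Normal := fun i => Subgroup.normalClosure_normal
  -- the basic commuting relation
  have hcomm0 : ∀ (i : Fin n) (g : RF n), Commute (a i) (g⁻¹ * a i * g) := by
    intro i g
    obtain ⟨w, rfl⟩ := QuotientGroup.mk'_surjective N g
    have hr : ((FreeGroup.of i)⁻¹ * (w⁻¹ * FreeGroup.of i * w)⁻¹ *
        FreeGroup.of i * (w⁻¹ * FreeGroup.of i * w) : FreeGroup (Fin n)) ∈ N :=
      Subgroup.subset_normalClosure ⟨i, w, rfl⟩
    have h1 : mk ((FreeGroup.of i)⁻¹ * (w⁻¹ * FreeGroup.of i * w)⁻¹ *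
        FreeGroup.of i * (w⁻¹ * FreeGroup.of i * w)) = 1 :=
      (QuotientGroup.eq_one_iff _).mpr hr
    simp only [map_mul, map_inv] at h1
    have h2 : (a i)⁻¹ * ((mk w)⁻¹ * a i * mk w)⁻¹ * a i * ((mk w)⁻¹ * a i * mk w) = 1 := h1
    have h3 : ⁅(a i)⁻¹, ((mk w)⁻¹ * a i * mk w)⁻¹⁆ = 1 := by
      rw [show ⁅(a i)⁻¹, ((mk w)⁻¹ * a i * mk w)⁻¹⁆ =
        (a i)⁻¹ * ((mk w)⁻¹ * a i * mk w)⁻¹ * a i * ((mk w)⁻¹ * a i * mk w) by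
          simp only [commutatorElement_def]; group]
      exact h2
    have h4 := commutatorElement_eq_one_iff_commute.mp h3
    have h5 := h4.inv_inv
    simp only [inv_inv] at h5
    exact h5
  -- conjugation preserves commuting
  have hconj : ∀ (u v w : RF n), Commute u v → Commute (w * u * w⁻¹) (w * v * w⁻¹) := by
    intro u v w h
    show (w * u * w⁻¹) * (w * v * w⁻¹) = (w * v * w⁻¹) * (w * u * w⁻¹)
    calc (w * u * w⁻¹) * (w * v * w⁻¹) = w * (u * v) * w⁻¹ := by group
      _ = w * (v * u) * w⁻¹ := by rw [h.eq]
      _ = (w * v * w⁻¹) * (w * u * w⁻¹) := by group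
  -- conjugates of a generator pairwise commute
  have hpair : ∀ (i : Fin n), ∀ x ∈ Group.conjugatesOfSet ({a i} : Set (RF n)),
      ∀ y ∈ Group.conjugatesOfSet ({a i} : Set (RF n)), Commute x y := by
    intro i x hx y hy
    rw [Group.mem_conjugatesOfSet_iff] at hx hy
    obtain ⟨b, hb, hxc⟩ := hx
    obtain ⟨b', hb', hyc⟩ := hy
    rcases Set.mem_singleton_iff.mp hb with rfl
    rcases Set.mem_singleton_iff.mp hb' with rfl
    obtain ⟨c, hc⟩ := isConj_iff.mp hxc
    obtain ⟨d, hd⟩ := isConj_iff.mp hyc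
    subst hc hd
    have hbase : Commute (a i) (c⁻¹ * d * a i * d⁻¹ * c) := by
      have := hcomm0 i (d⁻¹ * c)
      rw [show (d⁻¹ * c)⁻¹ * a i * (d⁻¹ * c) = c⁻¹ * d * a i * d⁻¹ * c by group] at this
      exact this
    have h5 := hconj (a i) (c⁻¹ * d * a i * d⁻¹ * c) c hbase
    rw [show c * (c⁻¹ * d * a i * d⁻¹ * c) * c⁻¹ = d * a i * d⁻¹ by group] at h5
    exact h5
  -- each A i is abelian
  have habel : ∀ i, ⁅A i, A i⁆ = ⊥ := by
    intro i
    rw [Subgroup.commutator_eq_bot_iff_le_centralizer]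
    set C := Group.conjugatesOfSet ({a i} : Set (RF n)) with hC
    have h1 : Subgroup.closure C ≤ Subgroup.centralizer C := by
      rw [Subgroup.closure_le]
      intro x hx
      rw [SetLike.mem_coe, Subgroup.mem_centralizer_iff]
      intro y hy
      exact (hpair i y hy x hx).eq
    have h2 : Subgroup.centralizer C ≤
        Subgroup.centralizer (Subgroup.closure C : Set (RF n)) := by
      intro x hx
      rw [Subgroup.mem_centralizer_iff] at hx ⊢
      intro y hy
      rw [SetLike.mem_coe] at hy
      refine Subgroup.closure_induction (p := fun y _ => y * x = x * y)
        (fun z hz => hx z hz) (by simp) ?_ ?_ hy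
      · intro z w _ _ hzx hwx
        rw [mul_assoc, hwx, ← mul_assoc, hzx, mul_assoc]
      · intro z _ hzx
        have : Commute z x := hzx
        exact this.inv_left.eq
    exact h1.trans h2
  -- the A i generate
  have hgen : ⨆ i, A i = ⊤ := by
    rw [eq_top_iff]
    intro x _
    obtain ⟨w, rfl⟩ := QuotientGroup.mk'_surjective N x
    refine FreeGroup.induction_on (C := fun w => mk w ∈ ⨆ i, A i) w ?_ ?_ ?_ ?_
    · show mk 1 ∈ ⨆ i, A i
      rw [map_one]; exact one_mem _
    · intro j
      exact le_iSup A j (Subgroup.subset_normalClosure (Set.mem_singleton _))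
    · intro j hj
      rw [map_inv]
      exact inv_mem hj
    · intro u v hu hv
      rw [map_mul]
      exact mul_mem hu hv
  exact aux_nilpotent_of_gens A hnorm habel hgen
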